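/- Fix integers b > a ≥ 1 and let g := gcd(a, b). Every {a,b}-multiplicative set S ⊆ ℕ satisfies limsup_{n→∞} |S ∩ {1,...,n}|/n ≤ b/(b+g). -/

import Mathlib

/-- `S` is `{a,b}`-multiplicative: `a*x ≠ b*y` for all `x, y ∈ S`. -/
def MulSidonPair (a b : ℕ) (S : Set ℕ) : Prop :=
  ∀ x ∈ S, ∀ y ∈ S, a * x ≠ b * y

attribute [local instance] Classical.propDecidable

open Finset

/-- numbers in `[1,N]` whose maximal power of `q` dividing them is even -/
noncomputable def EvSet (q N : ℕ) : Finset ℕ :=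
  (Finset.Icc 1 N).filter (fun t => Even (padicValNat q t))

lemma maxPowDiv_coprime_mul {q a t : ℕ} (hq : 1 < q) (hco : Nat.Coprime a q)
    (ha : 0 < a) (ht : 0 < t) :
    padicValNat q (a * t) = padicValNat q t := by
  apply le_antisymm
  · apply (Nat.pow_dvd_iff_le_padicValNat hq.ne' ht.ne').mp
    have h := pow_padicValNat_dvd (p := q) (n := a * t)
    exact (Nat.Coprime.pow_left _ hco.symm).dvd_of_dvd_mul_left h
  · exact (Nat.pow_dvd_iff_le_padicValNat hq.ne' (by positivity)).mp
      ((pow_padicValNat_dvd (p := q) (n := t)).mul_left a)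

lemma EvSet_rec {q : ℕ} (hq : 2 ≤ q) (N : ℕ) :
    (EvSet q N).card + (EvSet q (N / q)).card = N := by
  have hq1 : 1 < q := hq
  have h1 : (EvSet q N).card
      + ((Finset.Icc 1 N).filter (fun t => ¬ Even (padicValNat q t))).card = N := by
    rw [EvSet, Finset.card_filter_add_card_filter_not, Nat.card_Icc]
    omega
  have h2 : (EvSet q (N / q)).card
      = ((Finset.Icc 1 N).filter (fun t => ¬ Even (padicValNat q t))).card := by
    apply Finset.card_bij (fun s _ => q * s)
    · intro s hs
      simp only [EvSet, Finset.mem_filter, Finset.mem_Icc] at hs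
      obtain ⟨⟨hs1, hs2⟩, hev⟩ := hs
      simp only [Finset.mem_filter, Finset.mem_Icc]
      refine ⟨⟨by nlinarith, ?_⟩, ?_⟩
      · calc q * s ≤ q * (N / q) := by exact Nat.mul_le_mul_left q hs2
          _ ≤ N := Nat.mul_div_le N q
      · rw [Nat.maxPowDiv.base_mul_eq_succ hq1 (by omega)]
        simpa [Nat.even_add_one] using hev
    · intro s1 h1 s2 h2 heq
      exact Nat.eq_of_mul_eq_mul_left (by omega) heq
    · intro t ht
      simp only [Finset.mem_filter, Finset.mem_Icc] at ht
      obtain ⟨⟨ht1, ht2⟩, hodd⟩ := ht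
      have hv : 1 ≤ padicValNat q t := by
        rcases Nat.eq_zero_or_pos (padicValNat q t) with h | h
        · exact absurd (by simp [h]) hodd
        · exact h
      have hdvd : q ∣ t := by
        have := pow_padicValNat_dvd (p := q) (n := t)
        exact dvd_trans (dvd_trans (by simpa using pow_dvd_pow q hv) (dvd_refl _)) this
      obtain ⟨s, hsval⟩ := hdvd
      have hspos : 0 < s := by
        rcases Nat.eq_zero_or_pos s with h | h
        · subst h; omega
        · exact h
      refine ⟨s, ?_, hsval.symm⟩
      simp only [EvSet, Finset.mem_filter, Finset.mem_Icc]
      refine ⟨⟨hspos, ?_⟩, ?_⟩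
      · rw [Nat.le_div_iff_mul_le (by omega)]
        calc s * q = q * s := by ring
          _ ≤ N := by omega
      · have : padicValNat q t = padicValNat q s + 1 := by
          rw [hsval]; exact Nat.maxPowDiv.base_mul_eq_succ hq1 hspos.ne'
        rw [this] at hodd
        simpa [Nat.even_add_one] using hodd
  omega

lemma EvSet_bounds {q : ℕ} (hq : 2 ≤ q) : ∀ N : ℕ,
    q * N ≤ (q + 1) * (EvSet q N).card + q * (Nat.log q N + 1) ∧
    (q + 1) * (EvSet q N).card ≤ q * N + q * (Nat.log q N + 1) := by
  intro N
  induction N using Nat.strong_induction_on with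
  | _ N ih =>
  rcases Nat.lt_or_ge N q with hN | hN
  · have h0 : N / q = 0 := Nat.div_eq_of_lt hN
    have hrec := EvSet_rec hq N
    rw [h0] at hrec
    have hz : (EvSet q 0).card = 0 := by simp [EvSet]
    have hE : (EvSet q N).card = N := by omega
    rw [hE]
    constructor <;> nlinarith
  · have hMlt : N / q < N := Nat.div_lt_self (by omega) (by omega)
    obtain ⟨ihL, ihU⟩ := ih _ hMlt
    have hrec := EvSet_rec hq N
    have hlog : Nat.log q N = Nat.log q (N / q) + 1 := by
      have h1 := Nat.log_div_base q N
      have h2 := Nat.log_pos (by omega : 1 < q) hN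
      omega
    have hdm := Nat.div_add_mod N q
    have hmod : N % q < q := Nat.mod_lt N (by omega)
    have h1 : q * (N / q) ≤ N := Nat.mul_div_le N q
    have h2 : N < q * (N / q) + q := by omega
    have hrec' : (q + 1) * (EvSet q N).card + (q + 1) * (EvSet q (N / q)).card
        = (q + 1) * N := by rw [← Nat.mul_add, hrec]
    rw [hlog]
    constructor
    · nlinarith
    · nlinarith

lemma key_count (a b : ℕ) (ha : 1 ≤ a) (hab : a < b) (S : Set ℕ)
    (hS : MulSidonPair a b S) (n : ℕ) :
    ((Finset.Icc 1 n).filter (· ∈ S)).card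
      + (EvSet (b / Nat.gcd a b) (n / (b / Nat.gcd a b))).card ≤ n := by
  set g := Nat.gcd a b with hgdef
  set p := a / g with hpdef
  set q := b / g with hqdef
  have hg : 0 < g := Nat.gcd_pos_of_pos_left _ (by omega)
  have hag : g ∣ a := Nat.gcd_dvd_left a b
  have hbg : g ∣ b := Nat.gcd_dvd_right a b
  have hpa : g * p = a := Nat.mul_div_cancel' hag
  have hqb : g * q = b := Nat.mul_div_cancel' hbg
  have hp : 1 ≤ p := by
    rcases Nat.eq_zero_or_pos p with h | h
    · rw [h, Nat.mul_zero] at hpa; omega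
    · exact h
  have hpq : p < q := by
    by_contra h
    have : g * q ≤ g * p := Nat.mul_le_mul_left g (Nat.not_lt.mp h)
    omega
  have hq : 2 ≤ q := by omega
  have hq1 : 1 < q := hq
  have hco : Nat.Coprime p q := Nat.coprime_div_gcd_div_gcd hg
  have hinj : (EvSet q (n / q)).card
      ≤ ((Finset.Icc 1 n).filter (fun t => t ∉ S)).card := by
    apply Finset.card_le_card_of_injOn (fun t => if p * t ∈ S then q * t else p * t)
    · intro t ht
      simp only [EvSet, Finset.mem_coe, Finset.mem_filter, Finset.mem_Icc] at ht
      obtain ⟨⟨ht1, ht2⟩, hev⟩ := ht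
      have hmem : ∀ m : ℕ, 1 ≤ m → m ≤ q → m * t ∈ Finset.Icc 1 n := by
        intro m hm1 hm2
        simp only [Finset.mem_Icc]
        constructor
        · nlinarith
        · calc m * t ≤ q * t := Nat.mul_le_mul_right t hm2
            _ ≤ q * (n / q) := Nat.mul_le_mul_left q ht2
            _ ≤ n := Nat.mul_div_le n q
      by_cases hcase : p * t ∈ S
      · simp only [if_pos hcase, Finset.mem_coe, Finset.mem_filter]
        refine ⟨hmem q (by omega) le_rfl, ?_⟩
        intro hqt
        apply hS (q * t) hqt (p * t) hcase
        rw [← hpa, ← hqb]; ring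
      · simp only [if_neg hcase, Finset.mem_coe, Finset.mem_filter]
        exact ⟨hmem p hp (by omega), hcase⟩
    · intro t1 h1 t2 h2 heq
      simp only [Finset.coe_filter, EvSet, Set.mem_setOf_eq, Finset.mem_Icc,
        Finset.mem_coe, Finset.mem_filter] at h1 h2
      obtain ⟨⟨ht11, ht12⟩, hev1⟩ := h1
      obtain ⟨⟨ht21, ht22⟩, hev2⟩ := h2
      by_cases c1 : p * t1 ∈ S <;> by_cases c2 : p * t2 ∈ S <;>
        simp only [if_pos, if_neg, c1, c2, if_true, if_false] at heq
      · exact Nat.eq_of_mul_eq_mul_left (by omega) heq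
      · exfalso
        have hv1 : padicValNat q (q * t1) = padicValNat q t1 + 1 :=
          Nat.maxPowDiv.base_mul_eq_succ hq1 (by omega)
        have hv2 : padicValNat q (p * t2) = padicValNat q t2 :=
          maxPowDiv_coprime_mul hq1 hco (by omega) (by omega)
        rw [heq, hv2] at hv1
        obtain ⟨k1, hk1⟩ := hev1
        obtain ⟨k2, hk2⟩ := hev2
        omega
      · exfalso
        have hv1 : padicValNat q (q * t2) = padicValNat q t2 + 1 :=
          Nat.maxPowDiv.base_mul_eq_succ hq1 (by omega)
        have hv2 : padicValNat q (p * t1) = padicValNat q t1 :=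
          maxPowDiv_coprime_mul hq1 hco (by omega) (by omega)
        rw [← heq, hv2] at hv1
        obtain ⟨k1, hk1⟩ := hev1
        obtain ⟨k2, hk2⟩ := hev2
        omega
      · exact Nat.eq_of_mul_eq_mul_left (by omega) heq
  have hsplit : ((Finset.Icc 1 n).filter (· ∈ S)).card
      + ((Finset.Icc 1 n).filter (fun t => t ∉ S)).card = n := by
    rw [Finset.card_filter_add_card_filter_not, Nat.card_Icc]
    omega
  omega

theorem stmt2 (a b : ℕ) (ha : 1 ≤ a) (hab : a < b) (S : Set ℕ)
    (hS : MulSidonPair a b S) :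
    Filter.limsup
      (fun n : ℕ => (((Finset.Icc 1 n).filter (· ∈ S)).card : ℝ) / n)
      Filter.atTop ≤ (b : ℝ) / ((b : ℝ) + (Nat.gcd a b : ℝ)) := by
  set g := Nat.gcd a b with hgdef
  set q := b / g with hqdef
  have hg : 0 < g := Nat.gcd_pos_of_pos_left _ (by omega)
  have hbg : g ∣ b := Nat.gcd_dvd_right a b
  have hqb : g * q = b := Nat.mul_div_cancel' hbg
  have hag : g ∣ a := Nat.gcd_dvd_left a b
  have hpa : g * (a / g) = a := Nat.mul_div_cancel' hag
  have hp : 1 ≤ a / g := by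
    rcases Nat.eq_zero_or_pos (a / g) with h | h
    · rw [h, Nat.mul_zero] at hpa; omega
    · exact h
  have hpq : a / g < q := by
    by_contra h
    have : g * q ≤ g * (a / g) := Nat.mul_le_mul_left g (Nat.not_lt.mp h)
    omega
  have hq : 2 ≤ q := by omega
  have hrhs : (b : ℝ) / ((b : ℝ) + (g : ℝ)) = (q : ℝ) / ((q : ℝ) + 1) := by
    rw [← hqb]
    have hg' : (0 : ℝ) < g := by exact_mod_cast hg
    have hq' : (0 : ℝ) < q := by exact_mod_cast (by omega : 0 < q)
    push_cast
    rw [div_eq_div_iff (by nlinarith) (by nlinarith)]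
    ring
  rw [hrhs]
  -- the key natural-number estimate
  have key : ∀ n : ℕ, (q + 1) * ((Finset.Icc 1 n).filter (· ∈ S)).card
      ≤ q * n + q * (Nat.log q n + 2) := by
    intro n
    have h1 := key_count a b ha hab S hS n
    rw [← hgdef, ← hqdef] at h1
    have h2 := (EvSet_bounds hq (n / q)).1
    have hdm := Nat.div_add_mod n q
    have hmod : n % q < q := Nat.mod_lt n (by omega)
    have h3 : q * (n / q) ≤ n := Nat.mul_div_le n q
    have h4 : n < q * (n / q) + q := by omega
    have h5 : Nat.log q (n / q) ≤ Nat.log q n := Nat.log_mono_right (Nat.div_le_self n q)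
    have h1' : (q + 1) * ((Finset.Icc 1 n).filter (· ∈ S)).card
        + (q + 1) * (EvSet q (n / q)).card ≤ (q + 1) * n := by
      calc (q + 1) * ((Finset.Icc 1 n).filter (· ∈ S)).card
            + (q + 1) * (EvSet q (n / q)).card
          = (q + 1) * (((Finset.Icc 1 n).filter (· ∈ S)).card
            + (EvSet q (n / q)).card) := by ring
        _ ≤ (q + 1) * n := Nat.mul_le_mul_left _ h1
    have h6 : q * (Nat.log q (n / q) + 1) ≤ q * (Nat.log q n + 1) :=
      Nat.mul_le_mul_left q (by omega)
    nlinarith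
  have hq' : (0 : ℝ) < q := by exact_mod_cast (by omega : 0 < q)
  set c : ℝ := (q : ℝ) / ((q : ℝ) + 1) with hcdef
  -- the error term tends to zero
  have herr : Filter.Tendsto
      (fun n : ℕ => ((q : ℝ) * (Nat.log q n + 2)) / n) Filter.atTop (nhds 0) := by
    have hlog2 : Filter.Tendsto (fun x : ℝ => Real.log x / x) Filter.atTop (nhds 0) := by
      simpa using Real.isLittleO_log_id_atTop.tendsto_div_nhds_zero
    have hbig : Filter.Tendsto
        (fun x : ℝ => ((q : ℝ) / Real.log 2) * (Real.log x / x) + 2 * (q : ℝ) * x⁻¹)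
        Filter.atTop (nhds 0) := by
      have h2 : Filter.Tendsto (fun x : ℝ => x⁻¹) Filter.atTop (nhds 0) :=
        tendsto_inv_atTop_zero
      have := (hlog2.const_mul ((q : ℝ) / Real.log 2)).add (h2.const_mul (2 * (q : ℝ)))
      simpa using this
    have hF : Filter.Tendsto
        (fun x : ℝ => ((q : ℝ) * (Real.logb 2 x + 2)) / x) Filter.atTop (nhds 0) := by
      apply hbig.congr'
      filter_upwards [Filter.eventually_gt_atTop (0 : ℝ)] with x hx
      rw [← Real.log_div_log]
      field_simp
    have hFn : Filter.Tendsto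
        (fun n : ℕ => ((q : ℝ) * (Real.logb 2 (n : ℝ) + 2)) / (n : ℝ))
        Filter.atTop (nhds 0) := hF.comp tendsto_natCast_atTop_atTop
    apply squeeze_zero' ?_ ?_ hFn
    · filter_upwards with n
      positivity
    · filter_upwards [Filter.eventually_ge_atTop 1] with n hn
      have hn' : (0 : ℝ) < n := by exact_mod_cast hn
      have hlogle : (Nat.log q n : ℝ) ≤ Real.logb 2 (n : ℝ) := by
        have h1 : Nat.log q n ≤ Nat.log 2 n := Nat.log_anti_left (by norm_num) hq
        have h2 : (Nat.log 2 n : ℝ) ≤ Real.logb 2 (n : ℝ) := by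
          simpa using Real.natLog_le_logb n 2
        calc (Nat.log q n : ℝ) ≤ (Nat.log 2 n : ℝ) := by exact_mod_cast h1
          _ ≤ _ := h2
      gcongr
  -- conclude
  apply le_of_forall_pos_le_add
  intro ε hε
  have hev : ∀ᶠ n : ℕ in Filter.atTop,
      (((Finset.Icc 1 n).filter (· ∈ S)).card : ℝ) / n ≤ c + ε := by
    filter_upwards [Filter.eventually_ge_atTop 1,
      herr.eventually_lt_const hε] with n hn1 hn2
    have hn' : (0 : ℝ) < n := by exact_mod_cast hn1
    set A : ℕ := ((Finset.Icc 1 n).filter (· ∈ S)).card with hA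
    set K : ℝ := (q : ℝ) * (Nat.log q n + 2) with hK
    have hKnn : (0 : ℝ) ≤ K := by positivity
    have hkey' : ((q : ℝ) + 1) * A ≤ (q : ℝ) * n + K := by
      have h := (Nat.cast_le (α := ℝ)).mpr (key n)
      push_cast at h
      rw [hK]
      linarith
    have hq1' : (0 : ℝ) < (q : ℝ) + 1 := by linarith
    have hc : c * ((q : ℝ) + 1) = (q : ℝ) := div_mul_cancel₀ _ (by linarith)
    have hc2 : c * ((q : ℝ) + 1) * n = (q : ℝ) * n := by rw [hc]
    have hA1 : (A : ℝ) ≤ c * n + K := by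
      nlinarith [mul_nonneg hKnn (le_of_lt hq'), hkey', hc2]
    have : (A : ℝ) / n ≤ c + K / n := by
      rw [div_le_iff₀ hn']
      have : (c + K / n) * n = c * n + K := by field_simp
      rw [this]
      exact hA1
    calc (A : ℝ) / n ≤ c + K / n := this
      _ ≤ c + ε := by
          have : K / n ≤ ε := le_of_lt hn2
          linarith
  refine Filter.limsup_le_of_le ?_ hev
  apply Filter.isCoboundedUnder_le_of_le Filter.atTop (x := 0)
  intro n
  positivity
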